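/- Let v(y) = 1 if y ≥ 0 and v(y) = 0 if y < 0. For every κ' > 0 and every real y, |v(y) - (1/(2πi)) ∫_{κ'-i}^{κ'+i} e^{ys}/s ds| ≤ |v(y) - (e^{yκ'}/π)·arctan(1/κ')| + |y|·e^{yκ'}/π. -/

import Mathlib

open Complex Real

lemma cne (κ' : ℝ) (hκ' : 0 < κ') (t : ℝ) : ((κ':ℂ) + Complex.I * t) ≠ 0 := by
  intro h
  have := congrArg Complex.re h
  simp at this
  linarith

lemma exp_I_sub_one_le (θ : ℝ) : ‖Complex.exp (θ * Complex.I) - 1‖ ≤ |θ| := by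
  rw [Complex.exp_mul_I]
  have h : Complex.cos θ + Complex.sin θ * Complex.I - 1
      = ((Real.cos θ - 1 : ℝ) : ℂ) + ((Real.sin θ : ℝ) : ℂ) * Complex.I := by
    push_cast; ring
  rw [h, Complex.norm_add_mul_I]
  have h1 : (Real.cos θ - 1) ^ 2 + Real.sin θ ^ 2 ≤ θ ^ 2 := by
    have := Real.one_sub_sq_div_two_le_cos (x := θ)
    nlinarith [Real.sin_sq_add_cos_sq θ]
  calc Real.sqrt ((Real.cos θ - 1) ^ 2 + Real.sin θ ^ 2) ≤ Real.sqrt (θ ^ 2) :=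
        Real.sqrt_le_sqrt h1
    _ = |θ| := Real.sqrt_sq_eq_abs θ

lemma integral_inv_c (κ' : ℝ) (hκ' : 0 < κ') :
    ∫ t in (-1:ℝ)..1, (1:ℂ)/((κ':ℂ) + Complex.I * t)
      = 2 * (Real.arctan (1/κ') : ℂ) := by
  have hne := cne κ' hκ'
  have hq : ∀ t : ℝ, (0:ℝ) < κ'^2 + t^2 := fun t => by positivity
  have hderiv : ∀ t ∈ Set.uIcc (-1:ℝ) 1,
      HasDerivAt (fun t : ℝ => ((Real.arctan (t/κ') : ℝ) : ℂ)
        - Complex.I/2 * ((Real.log (κ'^2 + t^2) : ℝ) : ℂ))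
        (1/((κ':ℂ) + Complex.I * t)) t := by
    intro t _
    have h1 : HasDerivAt (fun t : ℝ => Real.arctan (t/κ'))
        (1/(1+(t/κ')^2) * (1/κ')) t := by
      have := (Real.hasDerivAt_arctan (t/κ')).comp t ((hasDerivAt_id t).div_const κ')
      simpa [one_div, Function.comp_def] using this
    have h2 : HasDerivAt (fun t : ℝ => Real.log (κ'^2 + t^2))
        ((κ'^2+t^2)⁻¹ * (2*t)) t := by
      have hin : HasDerivAt (fun t : ℝ => κ'^2 + t^2) (2*t) t := by
        simpa using (hasDerivAt_pow 2 t).const_add (κ'^2)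
      exact (Real.hasDerivAt_log (hq t).ne').comp t hin
    have h := (h1.ofReal_comp).sub ((h2.ofReal_comp).const_mul (Complex.I/2))
    refine h.congr_deriv ?_
    have hκc : ((κ':ℂ)) ≠ 0 := by exact_mod_cast hκ'.ne'
    have hqc : ((κ':ℂ)^2 + (t:ℂ)^2) ≠ 0 := by
      have : ((κ'^2 + t^2 : ℝ) : ℂ) ≠ 0 := by exact_mod_cast (hq t).ne'
      push_cast at this; exact this
    have h3 : (1:ℝ)+(t/κ')^2 ≠ 0 := by positivity
    have hne2 : ((κ':ℂ) + (t:ℂ) * Complex.I) ≠ 0 := by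
      rw [mul_comm]; exact hne t
    have key : (1:ℂ)/((κ':ℂ)+Complex.I*t) = ((κ':ℂ) - Complex.I*t)/((κ':ℂ)^2+(t:ℂ)^2) := by
      rw [div_eq_div_iff (hne t) hqc]
      ring_nf
      rw [Complex.I_sq]
      ring
    rw [key]
    push_cast
    field_simp
  have hcont : Continuous (fun t : ℝ => (1:ℂ)/((κ':ℂ) + Complex.I * t)) := by
    exact continuous_const.div (by continuity) hne
  have := intervalIntegral.integral_eq_sub_of_hasDerivAt hderiv
    (hcont.intervalIntegrable _ _)
  rw [this]
  have : Real.arctan (-1/κ') = - Real.arctan (1/κ') := by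
    rw [neg_div, Real.arctan_neg]
  push_cast [this]
  ring_nf

/-- `v y = 1` if `y ≥ 0` and `0` otherwise. -/
noncomputable def v (y : ℝ) : ℝ := if 0 ≤ y then 1 else 0

theorem perron_kernel_bound_small_y (κ' y : ℝ) (hκ' : 0 < κ') :
    ‖(v y : ℂ) -
        (1 / (2 * (Real.pi : ℂ) * Complex.I)) *
          ∫ t in (-1:ℝ)..1,
            Complex.exp ((y : ℂ) * ((κ' : ℂ) + Complex.I * (t : ℂ))) /
              ((κ' : ℂ) + Complex.I * (t : ℂ)) * Complex.I‖ ≤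
      |v y - Real.exp (y * κ') / Real.pi * Real.arctan (1 / κ')| +
        |y| * Real.exp (y * κ') / Real.pi := by
  have hne := cne κ' hκ'
  set E : ℝ := Real.exp (y * κ') with hE
  have hEpos : 0 < E := Real.exp_pos _
  -- pointwise decomposition
  have hpt : ∀ t : ℝ,
      Complex.exp ((y : ℂ) * ((κ' : ℂ) + Complex.I * t)) /
          ((κ' : ℂ) + Complex.I * t) * Complex.I
        = (E:ℂ) * Complex.I * (1/((κ':ℂ) + Complex.I * t))
          + (E:ℂ) * Complex.I *
            ((Complex.exp (((y*t:ℝ):ℂ) * Complex.I) - 1)/((κ':ℂ) + Complex.I * t)) := by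
    intro t
    have hexp : Complex.exp ((y : ℂ) * ((κ' : ℂ) + Complex.I * t))
        = (E:ℂ) * Complex.exp (((y*t:ℝ):ℂ) * Complex.I) := by
      have harg : (y:ℂ) * ((κ':ℂ)+Complex.I*t) = ((y*κ':ℝ):ℂ) + ((y*t:ℝ):ℂ)*Complex.I := by
        push_cast; ring
      rw [harg, Complex.exp_add, hE, Complex.ofReal_exp]
    rw [hexp]
    field_simp
    ring
  rw [intervalIntegral.integral_congr (fun t _ => hpt t)]
  -- integrability
  have hcont1 : Continuous (fun t : ℝ => (1:ℂ)/((κ':ℂ) + Complex.I * t)) :=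
    continuous_const.div (by continuity) hne
  have hcont2 : Continuous (fun t : ℝ =>
      (Complex.exp (((y*t:ℝ):ℂ) * Complex.I) - 1)/((κ':ℂ) + Complex.I * t)) := by
    apply Continuous.div _ (by continuity) hne
    exact (Complex.continuous_exp.comp (by continuity)).sub continuous_const
  rw [intervalIntegral.integral_add
      (((show Continuous fun t : ℝ => (E:ℂ) * Complex.I * (1/((κ':ℂ) + Complex.I * t)) from continuous_const.mul hcont1)).intervalIntegrable _ _)
      (((show Continuous fun t : ℝ => (E:ℂ) * Complex.I * ((Complex.exp (((y*t:ℝ):ℂ) * Complex.I) - 1)/((κ':ℂ) + Complex.I * t)) from continuous_const.mul hcont2)).intervalIntegrable _ _),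
    intervalIntegral.integral_const_mul, intervalIntegral.integral_const_mul,
    integral_inv_c κ' hκ']
  set J : ℂ := ∫ t in (-1:ℝ)..1,
      (Complex.exp (((y*t:ℝ):ℂ) * Complex.I) - 1)/((κ':ℂ) + Complex.I * t) with hJ
  -- bound on J
  have hJb : ‖J‖ ≤ 2 * |y| := by
    have := intervalIntegral.norm_integral_le_of_norm_le_const (C := |y|)
      (f := fun t : ℝ => (Complex.exp (((y*t:ℝ):ℂ) * Complex.I) - 1)/((κ':ℂ) + Complex.I * t))
      (a := (-1:ℝ)) (b := 1) ?_
    · calc ‖J‖ ≤ |y| * |(1:ℝ) - (-1)| := this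
        _ = 2 * |y| := by rw [show |(1:ℝ) - (-1)| = 2 by norm_num]; ring
    · intro t _
      rcases eq_or_ne t 0 with rfl | ht
      · simp
      · rw [norm_div]
        have hnum : ‖Complex.exp (((y*t:ℝ):ℂ) * Complex.I) - 1‖ ≤ |y| * |t| := by
          calc ‖Complex.exp (((y*t:ℝ):ℂ) * Complex.I) - 1‖ ≤ |y*t| :=
                exp_I_sub_one_le (y*t)
            _ = |y| * |t| := abs_mul y t
        have hden : |t| ≤ ‖(κ':ℂ) + Complex.I * t‖ := by
          have h := Complex.abs_im_le_norm ((κ':ℂ) + Complex.I * t)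
          simpa using h
        calc ‖Complex.exp (((y*t:ℝ):ℂ) * Complex.I) - 1‖ / ‖(κ':ℂ) + Complex.I * t‖
            ≤ (|y| * |t|) / |t| :=
              div_le_div₀ (by positivity) hnum (abs_pos.mpr ht) hden
          _ = |y| := by field_simp
  -- assemble
  have hπ : (Real.pi : ℂ) ≠ 0 := by exact_mod_cast Real.pi_ne_zero
  have hsplit : (1 / (2 * (Real.pi : ℂ) * Complex.I)) *
      ((E:ℂ) * Complex.I * (2 * (Real.arctan (1/κ') : ℂ)) + (E:ℂ) * Complex.I * J)
      = ((E / Real.pi * Real.arctan (1/κ') : ℝ) : ℂ)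
        + (1 / (2 * (Real.pi : ℂ))) * (E:ℂ) * J := by
    push_cast
    field_simp
  rw [hsplit]
  set A : ℝ := E / Real.pi * Real.arctan (1/κ') with hA
  have htri : ‖(v y : ℂ) - (((A : ℝ) : ℂ)
        + (1 / (2 * (Real.pi : ℂ))) * (E:ℂ) * J)‖
      ≤ ‖(v y : ℂ) - ((A : ℝ) : ℂ)‖
        + ‖(1 / (2 * (Real.pi : ℂ))) * (E:ℂ) * J‖ := by
    have h := norm_sub_le ((v y : ℂ) - ((A : ℝ) : ℂ))
      ((1 / (2 * (Real.pi : ℂ))) * (E:ℂ) * J)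
    rw [← sub_sub]
    exact h
  refine htri.trans ?_
  have h1 : ‖(v y : ℂ) - ((A : ℝ) : ℂ)‖ = |v y - A| := by
    rw [← Complex.ofReal_sub, Complex.norm_real, Real.norm_eq_abs]
  have h2 : ‖(1 / (2 * (Real.pi : ℂ))) * (E:ℂ) * J‖
      ≤ |y| * E / Real.pi := by
    rw [norm_mul, norm_mul, norm_div, norm_one, norm_mul, Complex.norm_two,
      Complex.norm_real, Complex.norm_real, Real.norm_eq_abs, Real.norm_eq_abs, abs_of_pos Real.pi_pos,
      abs_of_pos hEpos]
    calc 1 / (2 * Real.pi) * E * ‖J‖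
        ≤ 1 / (2 * Real.pi) * E * (2 * |y|) := by
          gcongr
      _ = |y| * E / Real.pi := by
          field_simp
  rw [h1]
  gcongr
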